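/- Let T' be a finite tree containing six distinct vertices x₁, x₂, x₃, v, x₅, w forming a path x₁–x₂–x₃–v–x₅–w, where in T' the degrees satisfy deg(x₁) = 1 and deg(x₂) = deg(x₃) = deg(v) = deg(x₅) = 2. Let T be the tree obtained from T' by adding three new vertices u₁, u₂, u₃ with edges u₁u₂, u₂u₃, and vu₁. Then γ₂(T) = γ₂(T') + 2 and α₂(T) = α₂(T') + 2; in particular α₂(T) − γ₂(T) = α₂(T') − γ₂(T'). -/

import Mathlib

open SimpleGraph

/-- `S` is a `k`-dominating set of the subgraph of `G` induced by `U`: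
`S ⊆ U` and every vertex of `U` not in `S` has at least `k` neighbors in `S`. -/
def IsKDomOn {V : Type*} (G : SimpleGraph V) (k : ℕ) (U S : Set V) : Prop :=
  S ⊆ U ∧ ∀ v ∈ U, v ∉ S → k ≤ (G.neighborSet v ∩ S).ncard

/-- `S` is a `k`-independent set of the subgraph of `G` induced by `U`:
`S ⊆ U` and every vertex of `S` has at most `k - 1` neighbors in `S`. -/
def IsKIndOn {V : Type*} (G : SimpleGraph V) (k : ℕ) (U S : Set V) : Prop :=
  S ⊆ U ∧ ∀ v ∈ S, (G.neighborSet v ∩ S).ncard ≤ k - 1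

/-- The `k`-domination number of the subgraph of `G` induced by `U`. -/
noncomputable def gammaK {V : Type*} (G : SimpleGraph V) (k : ℕ) (U : Set V) : ℕ :=
  sInf {n | ∃ S, IsKDomOn G k U S ∧ S.ncard = n}

/-- The `k`-independence number of the subgraph of `G` induced by `U`. -/
noncomputable def alphaK {V : Type*} (G : SimpleGraph V) (k : ℕ) (U : Set V) : ℕ :=
  sSup {n | ∃ S, IsKIndOn G k U S ∧ S.ncard = n}

/-! ### Auxiliary lemmas -/

lemma subset_pair_eq {α : Type*} {s : Set α} {a b : α} (h : s ⊆ {a, b}) (h2 : 2 ≤ s.ncard) :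
    s = {a, b} := by
  apply Set.eq_of_subset_of_ncard_le h ?_ (Set.toFinite _)
  exact le_trans ((Set.ncard_insert_le a {b}).trans (by simp)) h2

lemma nbr_eq_pair {V : Type*} [Fintype V] {G : SimpleGraph V} {x a b : V}
    (ha : G.Adj x a) (hb : G.Adj x b) (hab : a ≠ b) (hd : (G.neighborSet x).ncard = 2) :
    G.neighborSet x = {a, b} := by
  refine (Set.eq_of_subset_of_ncard_le ?_ ?_ (Set.toFinite _)).symm
  · intro y hy
    rcases hy with rfl | hy
    · exact ha
    · rcases hy with rfl; exact hb
  · rw [hd, Set.ncard_pair hab]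

lemma dom_le {V : Type*} (G : SimpleGraph V) (S : Set V) (h : IsKDomOn G 2 Set.univ S) :
    gammaK G 2 Set.univ ≤ S.ncard := Nat.sInf_le ⟨S, h, rfl⟩

lemma dom_exists {V : Type*} (G : SimpleGraph V) :
    ∃ S, IsKDomOn G 2 Set.univ S ∧ S.ncard = gammaK G 2 Set.univ := by
  have hne : {n | ∃ S, IsKDomOn G 2 Set.univ S ∧ S.ncard = n}.Nonempty :=
    ⟨(Set.univ : Set V).ncard, Set.univ, ⟨subset_rfl, fun v _ hv => absurd (Set.mem_univ v) hv⟩, rfl⟩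
  obtain ⟨S, hS, hcard⟩ := Nat.sInf_mem hne
  exact ⟨S, hS, hcard⟩

lemma ind_bdd {V : Type*} [Fintype V] (G : SimpleGraph V) :
    BddAbove {n | ∃ S, IsKIndOn G 2 Set.univ S ∧ S.ncard = n} := by
  refine ⟨(Set.univ : Set V).ncard, fun n hn => ?_⟩
  obtain ⟨S, _, rfl⟩ := hn
  exact Set.ncard_le_ncard (Set.subset_univ S) (Set.toFinite _)

lemma ind_le {V : Type*} [Fintype V] (G : SimpleGraph V) (S : Set V)
    (h : IsKIndOn G 2 Set.univ S) : S.ncard ≤ alphaK G 2 Set.univ :=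
  le_csSup (ind_bdd G) ⟨S, h, rfl⟩

lemma ind_exists {V : Type*} [Fintype V] (G : SimpleGraph V) :
    ∃ S, IsKIndOn G 2 Set.univ S ∧ S.ncard = alphaK G 2 Set.univ := by
  have hne : {n | ∃ S, IsKIndOn G 2 Set.univ S ∧ S.ncard = n}.Nonempty :=
    ⟨(∅ : Set V).ncard, ∅, ⟨Set.empty_subset _, fun v hv => absurd hv (Set.notMem_empty v)⟩, rfl⟩
  obtain ⟨S, hS, hcard⟩ := Nat.sSup_mem hne (ind_bdd G)
  exact ⟨S, hS, hcard⟩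

theorem stmt16 {V : Type*} [Fintype V] (T' : SimpleGraph V) (hT' : T'.IsTree)
    (x₁ x₂ x₃ v x₅ w : V) (hdist : ([x₁, x₂, x₃, v, x₅, w] : List V).Pairwise (· ≠ ·))
    (h1 : T'.Adj x₁ x₂) (h2 : T'.Adj x₂ x₃) (h3 : T'.Adj x₃ v)
    (h4 : T'.Adj v x₅) (h5 : T'.Adj x₅ w)
    (hd1 : (T'.neighborSet x₁).ncard = 1) (hd2 : (T'.neighborSet x₂).ncard = 2)
    (hd3 : (T'.neighborSet x₃).ncard = 2) (hdv : (T'.neighborSet v).ncard = 2)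
    (hd5 : (T'.neighborSet x₅).ncard = 2)
    (T : SimpleGraph (V ⊕ Fin 3))
    (hadj : ∀ a b, T.Adj a b ↔
      ((∃ x y, T'.Adj x y ∧ a = Sum.inl x ∧ b = Sum.inl y) ∨
       (a = (Sum.inr 0 : V ⊕ Fin 3) ∧ b = Sum.inr 1) ∨ (a = Sum.inr 1 ∧ b = (Sum.inr 0 : V ⊕ Fin 3)) ∨
       (a = (Sum.inr 1 : V ⊕ Fin 3) ∧ b = Sum.inr 2) ∨ (a = Sum.inr 2 ∧ b = (Sum.inr 1 : V ⊕ Fin 3)) ∨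
       (a = Sum.inl v ∧ b = (Sum.inr 0 : V ⊕ Fin 3)) ∨ (a = (Sum.inr 0 : V ⊕ Fin 3) ∧ b = Sum.inl v))) :
    gammaK T 2 Set.univ = gammaK T' 2 Set.univ + 2 ∧
    alphaK T 2 Set.univ = alphaK T' 2 Set.univ + 2 ∧
    (alphaK T 2 Set.univ : ℤ) - (gammaK T 2 Set.univ : ℤ) =
      (alphaK T' 2 Set.univ : ℤ) - (gammaK T' 2 Set.univ : ℤ) := by
  classical
  simp only [List.pairwise_cons, List.mem_cons, List.not_mem_nil, List.mem_singleton] at hdist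
  obtain ⟨p1, p2, p3, p4, p5, -⟩ := hdist
  have hx2v : x₂ ≠ v := p2 v (Or.inr (Or.inl rfl))
  have hx3x5 : x₃ ≠ x₅ := p3 x₅ (Or.inr (Or.inl rfl))
  have hvw : v ≠ w := p4 w (Or.inr (Or.inl rfl))
  have hx3v : x₃ ≠ v := p3 v (Or.inl rfl)
  -- adjacency characterizations
  have hlr : ∀ (x : V) (i : Fin 3), (Sum.inl x : V ⊕ Fin 3) ≠ Sum.inr i :=
    fun x i h => Sum.inl_ne_inr h
  have hAdjL : ∀ x b, T.Adj (Sum.inl x) b ↔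
      (∃ y, T'.Adj x y ∧ b = Sum.inl y) ∨ (x = v ∧ b = Sum.inr 0) := by
    intro x b
    rw [hadj]
    constructor
    · rintro (⟨p, q, hpq, hp, rfl⟩ | ⟨h, _⟩ | ⟨h, _⟩ | ⟨h, _⟩ | ⟨h, _⟩ | ⟨h, rfl⟩ | ⟨h, _⟩)
      · exact Or.inl ⟨q, by rw [Sum.inl.injEq] at hp; rwa [hp], rfl⟩
      · exact absurd h (hlr x 0)
      · exact absurd h (hlr x 1)
      · exact absurd h (hlr x 1)
      · exact absurd h (hlr x 2)
      · exact Or.inr ⟨Sum.inl.inj h, rfl⟩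
      · exact absurd h (hlr x 0)
    · rintro (⟨y, hy, rfl⟩ | ⟨rfl, rfl⟩)
      · exact Or.inl ⟨x, y, hy, rfl, rfl⟩
      · exact Or.inr (Or.inr (Or.inr (Or.inr (Or.inr (Or.inl ⟨rfl, rfl⟩)))))
  have hrne : ∀ (i j : Fin 3), i ≠ j → (Sum.inr i : V ⊕ Fin 3) ≠ Sum.inr j :=
    fun i j h hh => h (Sum.inr.inj hh)
  have hN1 : T.neighborSet (Sum.inr 1) = {Sum.inr 0, Sum.inr 2} := by
    ext b
    simp only [mem_neighborSet, Set.mem_insert_iff, Set.mem_singleton_iff]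
    rw [hadj]
    constructor
    · rintro (⟨p, q, _, hp, _⟩ | ⟨h, rfl⟩ | ⟨_, rfl⟩ | ⟨_, rfl⟩ | ⟨h, rfl⟩ | ⟨h, rfl⟩ | ⟨h, rfl⟩)
      · exact absurd hp.symm (hlr p 1)
      · exact absurd h.symm (hrne 0 1 (by decide))
      · exact Or.inl rfl
      · exact Or.inr rfl
      · exact absurd h.symm (hrne 2 1 (by decide))
      · exact absurd h.symm (hlr v 1)
      · exact absurd h.symm (hrne 0 1 (by decide))
    · rintro (rfl | rfl)
      · exact Or.inr (Or.inr (Or.inl ⟨rfl, rfl⟩))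
      · exact Or.inr (Or.inr (Or.inr (Or.inl ⟨rfl, rfl⟩)))
  have hN2 : T.neighborSet (Sum.inr 2) = {Sum.inr 1} := by
    ext b
    simp only [mem_neighborSet, Set.mem_singleton_iff]
    rw [hadj]
    constructor
    · rintro (⟨p, q, _, hp, _⟩ | ⟨h, rfl⟩ | ⟨h, rfl⟩ | ⟨h, rfl⟩ | ⟨_, rfl⟩ | ⟨h, rfl⟩ | ⟨h, rfl⟩)
      · exact absurd hp.symm (hlr p 2)
      · exact absurd h.symm (hrne 0 2 (by decide))
      · exact absurd h.symm (hrne 1 2 (by decide))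
      · exact absurd h.symm (hrne 1 2 (by decide))
      · rfl
      · exact absurd h.symm (hlr v 2)
      · exact absurd h.symm (hrne 0 2 (by decide))
    · rintro rfl
      exact Or.inr (Or.inr (Or.inr (Or.inr (Or.inl ⟨rfl, rfl⟩))))
  -- counting helpers
  have hmeminl : ∀ (x : V) (S' : Set V),
      (Sum.inl x : V ⊕ Fin 3) ∈ (Sum.inl '' S' : Set (V ⊕ Fin 3)) ↔ x ∈ S' :=
    fun x S' => (Sum.inl_injective (β := Fin 3)).mem_set_image
  have hsplit : ∀ S : Set (V ⊕ Fin 3),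
      S.ncard = (Sum.inl ⁻¹' S).ncard + (S ∩ Set.range Sum.inr).ncard := by
    intro S
    have hd : Disjoint (S ∩ Set.range Sum.inl) (S ∩ Set.range Sum.inr) :=
      Disjoint.mono Set.inter_subset_right Set.inter_subset_right
        (IsCompl.disjoint Set.isCompl_range_inl_range_inr)
    have hu : S = (S ∩ Set.range Sum.inl) ∪ (S ∩ Set.range Sum.inr) := by
      rw [← Set.inter_union_distrib_left, Set.range_inl_union_range_inr, Set.inter_univ]
    have himg : (Sum.inl ⁻¹' S).ncard = (S ∩ Set.range Sum.inl).ncard := by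
      rw [← Set.image_preimage_eq_inter_range, Set.ncard_image_of_injective _ Sum.inl_injective]
    rw [himg]
    conv_lhs => rw [hu]
    exact Set.ncard_union_eq hd (Set.toFinite _) (Set.toFinite _)
  have hcount : ∀ (S' : Set V) (a b : Fin 3), a ≠ b →
      ((Sum.inl '' S' ∪ {Sum.inr a, Sum.inr b} : Set (V ⊕ Fin 3)).ncard = S'.ncard + 2) := by
    intro S' a b hab
    have hd : Disjoint (Sum.inl '' S' : Set (V ⊕ Fin 3)) {Sum.inr a, Sum.inr b} := by
      rw [Set.disjoint_left]
      rintro c ⟨y, _, rfl⟩ (h | h) <;> exact hlr y _ h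
    rw [Set.ncard_union_eq hd (Set.toFinite _) (Set.toFinite _),
      Set.ncard_image_of_injective _ Sum.inl_injective, Set.ncard_pair (hrne a b hab)]
  -- Characterization of neighbor sets of x₃ and x₅ in T
  have hnb3' : T'.neighborSet x₃ = {x₂, v} := nbr_eq_pair h2.symm h3 hx2v hd3
  have hnb5' : T'.neighborSet x₅ = {v, w} := nbr_eq_pair h4.symm h5 hvw hd5
  have hnb3 : T.neighborSet (Sum.inl x₃) = {Sum.inl x₂, Sum.inl v} := by
    ext b
    rw [mem_neighborSet, hAdjL]
    constructor
    · rintro (⟨y, hy, rfl⟩ | ⟨h, _⟩)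
      · have : y ∈ T'.neighborSet x₃ := hy
        rw [hnb3'] at this
        rcases this with rfl | h'
        · exact Or.inl rfl
        · rw [Set.mem_singleton_iff] at h'; subst h'; exact Or.inr rfl
      · exact absurd h hx3v
    · rintro (rfl | h)
      · exact Or.inl ⟨x₂, h2.symm, rfl⟩
      · rw [Set.mem_singleton_iff] at h; subst h; exact Or.inl ⟨v, h3, rfl⟩
  have hx5v : x₅ ≠ v := fun h => (p4 x₅ (Or.inl rfl)) h.symm
  have hnb5 : T.neighborSet (Sum.inl x₅) = {Sum.inl v, Sum.inl w} := by
    ext b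
    rw [mem_neighborSet, hAdjL]
    constructor
    · rintro (⟨y, hy, rfl⟩ | ⟨h, _⟩)
      · have : y ∈ T'.neighborSet x₅ := hy
        rw [hnb5'] at this
        rcases this with rfl | h'
        · exact Or.inl rfl
        · rw [Set.mem_singleton_iff] at h'; subst h'; exact Or.inr rfl
      · exact absurd h hx5v
    · rintro (rfl | h)
      · exact Or.inl ⟨v, h4.symm, rfl⟩
      · rw [Set.mem_singleton_iff] at h; subst h; exact Or.inl ⟨w, h5, rfl⟩
  -- γ upper bound : gammaK T ≤ gammaK T' + 2
  have hg_ub : gammaK T 2 Set.univ ≤ gammaK T' 2 Set.univ + 2 := by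
    obtain ⟨S', hS', hc'⟩ := dom_exists T'
    set S : Set (V ⊕ Fin 3) := Sum.inl '' S' ∪ {Sum.inr 0, Sum.inr 2} with hSdef
    have hdom : IsKDomOn T 2 Set.univ S := by
      refine ⟨Set.subset_univ _, ?_⟩
      rintro (x | i) - hb
      · have hx : x ∉ S' := fun hx => hb (Or.inl ⟨x, hx, rfl⟩)
        have h2x := hS'.2 x (Set.mem_univ x) hx
        have hsub : Sum.inl '' (T'.neighborSet x ∩ S') ⊆ T.neighborSet (Sum.inl x) ∩ S := by
          rintro c ⟨y, ⟨hy1, hy2⟩, rfl⟩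
          exact ⟨(hAdjL x _).mpr (Or.inl ⟨y, hy1, rfl⟩), Or.inl ⟨y, hy2, rfl⟩⟩
        calc 2 ≤ (T'.neighborSet x ∩ S').ncard := h2x
          _ = (Sum.inl '' (T'.neighborSet x ∩ S')).ncard :=
            (Set.ncard_image_of_injective _ Sum.inl_injective).symm
          _ ≤ _ := Set.ncard_le_ncard hsub (Set.toFinite _)
      · have hi : i = 1 := by
          fin_cases i
          · exact absurd (Or.inr (Or.inl rfl)) hb
          · rfl
          · exact absurd (Or.inr (Or.inr rfl)) hb
        subst hi
        have hsub : ({Sum.inr 0, Sum.inr 2} : Set (V ⊕ Fin 3)) ⊆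
            T.neighborSet (Sum.inr 1) ∩ S := by
          rintro c (rfl | h)
          · exact ⟨by rw [hN1]; exact Or.inl rfl, Or.inr (Or.inl rfl)⟩
          · rw [Set.mem_singleton_iff] at h; subst h
            exact ⟨by rw [hN1]; exact Or.inr rfl, Or.inr (Or.inr rfl)⟩
        calc 2 = ({Sum.inr 0, Sum.inr 2} : Set (V ⊕ Fin 3)).ncard :=
            (Set.ncard_pair (hrne 0 2 (by decide))).symm
          _ ≤ _ := Set.ncard_le_ncard hsub (Set.toFinite _)
    have := dom_le T S hdom
    rwa [hSdef, hcount S' 0 2 (by decide), hc'] at this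
  -- γ lower bound : gammaK T' + 2 ≤ gammaK T
  have hg_lb : gammaK T' 2 Set.univ + 2 ≤ gammaK T 2 Set.univ := by
    obtain ⟨S, hS, hc⟩ := dom_exists T
    -- u₃ ∈ S
    have hu3 : Sum.inr 2 ∈ S := by
      by_contra h
      have h2 := hS.2 _ (Set.mem_univ (Sum.inr 2 : V ⊕ Fin 3)) h
      have : (T.neighborSet (Sum.inr 2) ∩ S).ncard ≤ 1 := by
        rw [hN2]
        exact le_trans (Set.ncard_le_ncard Set.inter_subset_left (Set.toFinite _))
          (le_of_eq (Set.ncard_singleton _))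
      omega
    -- at least two of u₁,u₂,u₃ are in S
    have htwo : ∃ a b : Fin 3, a ≠ b ∧ Sum.inr a ∈ S ∧ Sum.inr b ∈ S := by
      by_cases h1' : (Sum.inr 1 : V ⊕ Fin 3) ∈ S
      · exact ⟨1, 2, by decide, h1', hu3⟩
      · have h2' := hS.2 _ (Set.mem_univ (Sum.inr 1 : V ⊕ Fin 3)) h1'
        have hsub : T.neighborSet (Sum.inr 1) ∩ S ⊆ {Sum.inr 0, Sum.inr 2} := by
          rw [hN1]; exact Set.inter_subset_left
        have heq := subset_pair_eq hsub h2'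
        have h0 : (Sum.inr 0 : V ⊕ Fin 3) ∈ S := by
          have : (Sum.inr 0 : V ⊕ Fin 3) ∈ T.neighborSet (Sum.inr 1) ∩ S := by
            rw [heq]; exact Or.inl rfl
          exact this.2
        exact ⟨0, 2, by decide, h0, hu3⟩
    -- if v ∉ S then x₃, x₅ ∈ S
    have hvkey : Sum.inl v ∉ S → (Sum.inl x₃ ∈ S ∧ Sum.inl x₅ ∈ S) := by
      intro hv
      constructor
      · by_contra h3s
        have h2' := hS.2 _ (Set.mem_univ (Sum.inl x₃)) h3s
        have hsub : T.neighborSet (Sum.inl x₃) ∩ S ⊆ {Sum.inl x₂, Sum.inl v} := by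
          rw [hnb3]; exact Set.inter_subset_left
        have heq := subset_pair_eq hsub h2'
        have : (Sum.inl v : V ⊕ Fin 3) ∈ T.neighborSet (Sum.inl x₃) ∩ S := by
          rw [heq]; exact Or.inr rfl
        exact hv this.2
      · by_contra h5s
        have h2' := hS.2 _ (Set.mem_univ (Sum.inl x₅)) h5s
        have hsub : T.neighborSet (Sum.inl x₅) ∩ S ⊆ {Sum.inl v, Sum.inl w} := by
          rw [hnb5]; exact Set.inter_subset_left
        have heq := subset_pair_eq hsub h2'
        have : (Sum.inl v : V ⊕ Fin 3) ∈ T.neighborSet (Sum.inl x₅) ∩ S := by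
          rw [heq]; exact Or.inl rfl
        exact hv this.2
    -- the restriction of S to V is 2-dominating for T'
    have hdom' : IsKDomOn T' 2 Set.univ (Sum.inl ⁻¹' S) := by
      refine ⟨Set.subset_univ _, ?_⟩
      intro x _ hx
      by_cases hxv : x = v
      · rw [hxv] at hx ⊢
        obtain ⟨h3', h5'⟩ := hvkey hx
        have hsub : ({x₃, x₅} : Set V) ⊆ T'.neighborSet v ∩ Sum.inl ⁻¹' S := by
          rintro y (rfl | h)
          · exact ⟨h3.symm, h3'⟩
          · rw [Set.mem_singleton_iff] at h; subst h; exact ⟨h4, h5'⟩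
        calc 2 = ({x₃, x₅} : Set V).ncard := (Set.ncard_pair hx3x5).symm
          _ ≤ _ := Set.ncard_le_ncard hsub (Set.toFinite _)
      · have h2' := hS.2 _ (Set.mem_univ (Sum.inl x)) hx
        have hsub : T.neighborSet (Sum.inl x) ∩ S ⊆
            Sum.inl '' (T'.neighborSet x ∩ Sum.inl ⁻¹' S) := by
          rintro c ⟨hc1, hc2⟩
          rw [mem_neighborSet, hAdjL] at hc1
          rcases hc1 with ⟨y, hy, rfl⟩ | ⟨h, _⟩
          · exact ⟨y, ⟨hy, hc2⟩, rfl⟩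
          · exact absurd h hxv
        calc 2 ≤ (T.neighborSet (Sum.inl x) ∩ S).ncard := h2'
          _ ≤ (Sum.inl '' (T'.neighborSet x ∩ Sum.inl ⁻¹' S)).ncard :=
            Set.ncard_le_ncard hsub (Set.toFinite _)
          _ = _ := Set.ncard_image_of_injective _ Sum.inl_injective
    have hγ' := dom_le T' _ hdom'
    obtain ⟨a, b, hab, ha, hb⟩ := htwo
    have hge2 : 2 ≤ (S ∩ Set.range Sum.inr).ncard := by
      have hsub : ({Sum.inr a, Sum.inr b} : Set (V ⊕ Fin 3)) ⊆ S ∩ Set.range Sum.inr := by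
        rintro c (rfl | h)
        · exact ⟨ha, a, rfl⟩
        · rw [Set.mem_singleton_iff] at h; subst h; exact ⟨hb, b, rfl⟩
      calc 2 = ({Sum.inr a, Sum.inr b} : Set (V ⊕ Fin 3)).ncard :=
          (Set.ncard_pair (hrne a b hab)).symm
        _ ≤ _ := Set.ncard_le_ncard hsub (Set.toFinite _)
    have := hsplit S
    omega
  -- α lower bound : alphaK T' + 2 ≤ alphaK T
  have ha_lb : alphaK T' 2 Set.univ + 2 ≤ alphaK T 2 Set.univ := by
    obtain ⟨A', hA', hcA'⟩ := ind_exists T'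
    set A : Set (V ⊕ Fin 3) := Sum.inl '' A' ∪ {Sum.inr 1, Sum.inr 2} with hAdef
    have hr0A : (Sum.inr 0 : V ⊕ Fin 3) ∉ A := by
      rintro (⟨y, _, hy⟩ | h | h)
      · exact hlr y 0 hy
      · exact hrne 0 1 (by decide) h
      · exact hrne 0 2 (by decide) h
    have hind : IsKIndOn T 2 Set.univ A := by
      refine ⟨Set.subset_univ _, ?_⟩
      rintro c hc
      rcases hc with ⟨x, hx, rfl⟩ | hc
      · have hsub : T.neighborSet (Sum.inl x) ∩ A ⊆ Sum.inl '' (T'.neighborSet x ∩ A') := by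
          rintro c ⟨hc1, hc2⟩
          rw [mem_neighborSet, hAdjL] at hc1
          rcases hc1 with ⟨y, hy, rfl⟩ | ⟨_, rfl⟩
          · rcases hc2 with hc2 | hc2 | hc2
            · exact ⟨y, ⟨hy, (hmeminl y A').mp hc2⟩, rfl⟩
            · exact absurd hc2 (hlr y 1)
            · exact absurd hc2 (hlr y 2)
          · exact absurd hc2 hr0A
        calc (T.neighborSet (Sum.inl x) ∩ A).ncard
            ≤ (Sum.inl '' (T'.neighborSet x ∩ A')).ncard :=
              Set.ncard_le_ncard hsub (Set.toFinite _)
          _ = (T'.neighborSet x ∩ A').ncard := Set.ncard_image_of_injective _ Sum.inl_injective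
          _ ≤ 2 - 1 := hA'.2 x hx
      · rcases hc with rfl | hc
        · have hsub : T.neighborSet (Sum.inr 1) ∩ A ⊆ {Sum.inr 2} := by
            rintro c ⟨hc1, hc2⟩
            rw [hN1] at hc1
            rcases hc1 with rfl | hc1
            · exact absurd hc2 hr0A
            · exact hc1
          exact le_trans (Set.ncard_le_ncard hsub (Set.toFinite _))
            (le_of_eq (Set.ncard_singleton _))
        · rw [Set.mem_singleton_iff] at hc; subst hc
          have hsub : T.neighborSet (Sum.inr 2) ∩ A ⊆ {Sum.inr 1} := by
            rw [hN2]; exact Set.inter_subset_left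
          exact le_trans (Set.ncard_le_ncard hsub (Set.toFinite _))
            (le_of_eq (Set.ncard_singleton _))
    have := ind_le T A hind
    rw [hAdef, hcount A' 1 2 (by decide), hcA'] at this
    omega
  -- α upper bound : alphaK T ≤ alphaK T' + 2
  have ha_ub : alphaK T 2 Set.univ ≤ alphaK T' 2 Set.univ + 2 := by
    obtain ⟨A, hA, hcA⟩ := ind_exists T
    have hinr2 : (A ∩ Set.range Sum.inr).ncard ≤ 2 := by
      by_contra hcon
      push_neg at hcon
      have hsub : A ∩ Set.range Sum.inr ⊆
          ({Sum.inr 0, Sum.inr 1, Sum.inr 2} : Set (V ⊕ Fin 3)) := by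
        rintro c ⟨_, i, rfl⟩
        fin_cases i
        · exact Or.inl rfl
        · exact Or.inr (Or.inl rfl)
        · exact Or.inr (Or.inr rfl)
      have h3card : ({Sum.inr 0, Sum.inr 1, Sum.inr 2} : Set (V ⊕ Fin 3)).ncard ≤ 3 :=
        le_trans (Set.ncard_insert_le _ _) (by
          have := Set.ncard_pair (hrne 1 2 (by decide)) (α := V ⊕ Fin 3)
          omega)
      have heq := Set.eq_of_subset_of_ncard_le hsub (by omega) (Set.toFinite _)
      have hmem : ∀ c, c ∈ ({Sum.inr 0, Sum.inr 1, Sum.inr 2} : Set (V ⊕ Fin 3)) → c ∈ A := by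
        intro c hc
        rw [← heq] at hc
        exact hc.1
      have h0A : (Sum.inr 0 : V ⊕ Fin 3) ∈ A := hmem _ (Or.inl rfl)
      have h1A : (Sum.inr 1 : V ⊕ Fin 3) ∈ A := hmem _ (Or.inr (Or.inl rfl))
      have h2A : (Sum.inr 2 : V ⊕ Fin 3) ∈ A := hmem _ (Or.inr (Or.inr rfl))
      have hkey := hA.2 _ h1A
      have hsub2 : ({Sum.inr 0, Sum.inr 2} : Set (V ⊕ Fin 3)) ⊆ T.neighborSet (Sum.inr 1) ∩ A := by
        rintro c (rfl | h)
        · exact ⟨by rw [hN1]; exact Or.inl rfl, h0A⟩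
        · rw [Set.mem_singleton_iff] at h; subst h
          exact ⟨by rw [hN1]; exact Or.inr rfl, h2A⟩
      have : 2 ≤ (T.neighborSet (Sum.inr 1) ∩ A).ncard :=
        le_trans (le_of_eq (Set.ncard_pair (hrne 0 2 (by decide))).symm)
          (Set.ncard_le_ncard hsub2 (Set.toFinite _))
      omega
    have hind' : IsKIndOn T' 2 Set.univ (Sum.inl ⁻¹' A) := by
      refine ⟨Set.subset_univ _, ?_⟩
      intro x hx
      have hsub : Sum.inl '' (T'.neighborSet x ∩ Sum.inl ⁻¹' A) ⊆
          T.neighborSet (Sum.inl x) ∩ A := by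
        rintro c ⟨y, ⟨hy1, hy2⟩, rfl⟩
        exact ⟨(hAdjL x _).mpr (Or.inl ⟨y, hy1, rfl⟩), hy2⟩
      calc (T'.neighborSet x ∩ Sum.inl ⁻¹' A).ncard
          = (Sum.inl '' (T'.neighborSet x ∩ Sum.inl ⁻¹' A)).ncard :=
            (Set.ncard_image_of_injective _ Sum.inl_injective).symm
        _ ≤ (T.neighborSet (Sum.inl x) ∩ A).ncard := Set.ncard_le_ncard hsub (Set.toFinite _)
        _ ≤ 2 - 1 := hA.2 _ hx
    have hα' := ind_le T' _ hind'
    have := hsplit A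
    omega
  refine ⟨le_antisymm hg_ub hg_lb, le_antisymm ha_ub ha_lb, ?_⟩
  have e1 : gammaK T 2 Set.univ = gammaK T' 2 Set.univ + 2 := le_antisymm hg_ub hg_lb
  have e2 : alphaK T 2 Set.univ = alphaK T' 2 Set.univ + 2 := le_antisymm ha_ub ha_lb
  rw [e1, e2]
  push_cast
  ring
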